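/- For all real μ and all σ > 0, lim_{ε→0⁺} Φ((ln ε − μ)/σ)/ε² = 0, where Φ is the standard normal CDF. -/

import Mathlib

open MeasureTheory Real Filter

/-- The standard normal cumulative distribution function
`Φ(x) = (1/√(2π)) · ∫_{-∞}^x exp(-t²/2) dt`. -/
noncomputable def stdNormalCDF (x : ℝ) : ℝ :=
  ∫ t in Set.Iic x, (Real.sqrt (2 * π))⁻¹ * Real.exp (-t ^ 2 / 2)

lemma integrableOn_exp_mul_Iic' {c : ℝ} (hc : 0 < c) (x : ℝ) :
    IntegrableOn (fun t : ℝ => Real.exp (c * t)) (Set.Iic x) := by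
  have h1 : Integrable ((Set.Iic (c * x)).indicator Real.exp) := by
    rw [integrable_indicator_iff measurableSet_Iic]
    exact integrableOn_exp_Iic (c * x)
  have h2 : Integrable (fun t : ℝ => (Set.Iic (c * x)).indicator Real.exp (c * t)) :=
    h1.comp_mul_left' hc.ne'
  have heq : (fun t : ℝ => (Set.Iic (c * x)).indicator Real.exp (c * t)) =
      (Set.Iic x).indicator (fun t => Real.exp (c * t)) := by
    ext t
    by_cases ht : t ≤ x
    · rw [Set.indicator_of_mem (by simpa using mul_le_mul_of_nonneg_left ht hc.le),
        Set.indicator_of_mem (by simpa using ht)]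
    · rw [Set.indicator_of_notMem, Set.indicator_of_notMem (by simpa using ht)]
      simp only [Set.mem_Iic, not_le] at ht ⊢
      exact mul_lt_mul_of_pos_left ht hc
  exact (integrable_indicator_iff measurableSet_Iic).mp (heq ▸ h2)

lemma integral_exp_mul_Iic' {c : ℝ} (hc : 0 < c) (x : ℝ) :
    ∫ t in Set.Iic x, Real.exp (c * t) = Real.exp (c * x) / c := by
  have h1 : ∫ s in Set.Ioi (-x), Real.exp (-(c * s)) = ∫ t in Set.Iic x, Real.exp (c * t) := by
    have := integral_comp_neg_Ioi (-x) (fun t => Real.exp (c * t))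
    simpa [mul_neg, neg_neg] using this
  have h2 : ∫ s in Set.Ioi (-x), Real.exp (-(c * s))
      = c⁻¹ • ∫ u in Set.Ioi (c * -x), Real.exp (-u) :=
    integral_comp_mul_left_Ioi (fun u => Real.exp (-u)) (-x) hc
  rw [← h1, h2, integral_exp_neg_Ioi]
  rw [smul_eq_mul]
  rw [mul_neg, neg_neg]
  ring

lemma integrableOn_gauss_Iic (x : ℝ) :
    IntegrableOn (fun t : ℝ => Real.exp (-t ^ 2 / 2)) (Set.Iic x) := by
  have : Integrable (fun t : ℝ => Real.exp (-(1/2) * t ^ 2)) :=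
    integrable_exp_neg_mul_sq (by norm_num)
  have h : (fun t : ℝ => Real.exp (-t ^ 2 / 2)) = fun t => Real.exp (-(1/2) * t ^ 2) := by
    ext t; ring_nf
  rw [h]
  exact this.integrableOn

lemma stdNormalCDF_nonneg (x : ℝ) : 0 ≤ stdNormalCDF x := by
  apply setIntegral_nonneg measurableSet_Iic
  intro t _
  positivity

lemma stdNormalCDF_le {c : ℝ} (hc : 0 < c) (x : ℝ) :
    stdNormalCDF x ≤ (Real.sqrt (2 * π))⁻¹ * (Real.exp (c ^ 2 / 2) * (Real.exp (c * x) / c)) := by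
  unfold stdNormalCDF
  rw [integral_const_mul]
  apply mul_le_mul_of_nonneg_left _ (by positivity)
  have hint : ∫ t in Set.Iic x, Real.exp (c ^ 2 / 2) * Real.exp (c * t)
      = Real.exp (c ^ 2 / 2) * (Real.exp (c * x) / c) := by
    rw [integral_const_mul, integral_exp_mul_Iic' hc]
  rw [← hint]
  apply setIntegral_mono_on (integrableOn_gauss_Iic x)
    ((integrableOn_exp_mul_Iic' hc x).const_mul _) measurableSet_Iic
  intro t _
  rw [← Real.exp_add]
  apply Real.exp_le_exp.2
  nlinarith [sq_nonneg (t + c)]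

/-- `lim_{ε→0⁺} Φ((ln ε − μ)/σ)/ε² = 0`, where `Φ` is the standard normal CDF. -/
theorem stdNormalCDF_log_div_sq_tendsto_zero (μ σ : ℝ) (hσ : 0 < σ) :
    Tendsto (fun ε : ℝ => stdNormalCDF ((Real.log ε - μ) / σ) / ε ^ 2)
      (nhdsWithin 0 (Set.Ioi 0)) (nhds 0) := by
  set c : ℝ := 3 * σ with hc
  have hcpos : 0 < c := by positivity
  set K : ℝ := (Real.sqrt (2 * π))⁻¹ * (Real.exp (c ^ 2 / 2) * (Real.exp (-3 * μ) / c)) with hK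
  have hKnonneg : 0 ≤ K := by positivity
  have hbound : ∀ ε : ℝ, ε ∈ Set.Ioi (0:ℝ) →
      stdNormalCDF ((Real.log ε - μ) / σ) / ε ^ 2 ≤ K * ε := by
    intro ε hε
    rw [Set.mem_Ioi] at hε
    have hx : c * ((Real.log ε - μ) / σ) = 3 * Real.log ε - 3 * μ := by
      field_simp; ring
    have h1 := stdNormalCDF_le hcpos ((Real.log ε - μ) / σ)
    rw [hx] at h1
    have hexp : Real.exp (3 * Real.log ε - 3 * μ) = ε ^ 3 * Real.exp (-3 * μ) := by
      rw [Real.exp_sub, show (3:ℝ) * Real.log ε = (3:ℕ) * Real.log ε by norm_num,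
        Real.exp_nat_mul, Real.exp_log hε,
        neg_mul, Real.exp_neg, div_eq_mul_inv]
    rw [hexp] at h1
    rw [div_le_iff₀ (by positivity)]
    calc stdNormalCDF ((Real.log ε - μ) / σ)
        ≤ (Real.sqrt (2 * π))⁻¹ * (Real.exp (c ^ 2 / 2) * (ε ^ 3 * Real.exp (-3 * μ) / c)) := h1
      _ = K * ε * ε ^ 2 := by rw [hK]; ring
  have hzero : ∀ ε : ℝ, ε ∈ Set.Ioi (0:ℝ) →
      0 ≤ stdNormalCDF ((Real.log ε - μ) / σ) / ε ^ 2 := by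
    intro ε hε
    rw [Set.mem_Ioi] at hε
    exact div_nonneg (stdNormalCDF_nonneg _) (by positivity)
  have htop : Tendsto (fun ε : ℝ => K * ε) (nhdsWithin 0 (Set.Ioi 0)) (nhds 0) := by
    have : Tendsto (fun ε : ℝ => K * ε) (nhds 0) (nhds (K * 0)) :=
      (continuous_const.mul continuous_id).tendsto 0
    rw [mul_zero] at this
    exact this.mono_left nhdsWithin_le_nhds
  refine tendsto_of_tendsto_of_tendsto_of_le_of_le' tendsto_const_nhds htop ?_ ?_
  · exact eventually_nhdsWithin_of_forall hzero
  · exact eventually_nhdsWithin_of_forall hbound
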